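/- arXiv:2310.07901 — 3 statements merged into one kernel-verified Lean document; each statement's English description precedes it below -/
import Mathlib

section
/- Suppose x₁,...,x₉ are self-adjoint unitaries on a Hilbert space such that each of the triples (x₁,x₂,x₃), (x₄,x₅,x₆), (x₇,x₈,x₉), (x₁,x₄,x₇), (x₂,x₅,x₈), (x₃,x₆,x₉) consists of pairwise commuting operators, the products of the row triples equal +1 and the products of the column triples equal −1. Then the Hilbert space has dimension 0 or at least 4, and no such operators exist in dimension 1 (i.e., no scalar solution exists). -/
private lemma magic_cancel_left {R : Type*} [Monoid R] {u : R} (hu : u * u = 1) {a b : R}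
    (h : u * a = u * b) : a = b := by
  have h2 : u * (u * a) = u * (u * b) := by rw [h]
  rw [← mul_assoc, ← mul_assoc, hu, one_mul, one_mul] at h2
  exact h2

private lemma magic_cancel_right {R : Type*} [Monoid R] {u : R} (hu : u * u = 1) {a b : R}
    (h : a * u = b * u) : a = b := by
  have h2 : (a * u) * u = (b * u) * u := by rw [h]
  rw [mul_assoc, mul_assoc, hu, mul_one, mul_one] at h2
  exact h2

private lemma magic_aux {H : Type*} [NormedAddCommGroup H] [InnerProductSpace ℂ H]
    (a b c d : H →L[ℂ] H)
    (hc2 : c * c = 1) (hd2 : d * d = 1)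
    (hca : a * c = c * a) (hcb : b * c = -(c * b))
    (hda : a * d = -(d * a)) (hdb : b * d = d * b)
    (u : H) (hu : u ≠ 0) (hau : a u = u) (hbu : b u = u) :
    4 ≤ Module.rank ℂ H := by
  have apc2 : ∀ y : H, c (c y) = y := fun y => by
    have := DFunLike.congr_fun hc2 y
    simpa [ContinuousLinearMap.mul_apply] using this
  have apd2 : ∀ y : H, d (d y) = y := fun y => by
    have := DFunLike.congr_fun hd2 y
    simpa [ContinuousLinearMap.mul_apply] using this
  have apca : ∀ y : H, a (c y) = c (a y) := fun y => by
    have := DFunLike.congr_fun hca y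
    simpa [ContinuousLinearMap.mul_apply] using this
  have apcb : ∀ y : H, b (c y) = -(c (b y)) := fun y => by
    have := DFunLike.congr_fun hcb y
    simpa [ContinuousLinearMap.mul_apply] using this
  have apda : ∀ y : H, a (d y) = -(d (a y)) := fun y => by
    have := DFunLike.congr_fun hda y
    simpa [ContinuousLinearMap.mul_apply] using this
  have apdb : ∀ y : H, b (d y) = d (b y) := fun y => by
    have := DFunLike.congr_fun hdb y
    simpa [ContinuousLinearMap.mul_apply] using this
  set F : Module.End ℂ H := (a : H →ₗ[ℂ] H) + (3 : ℂ) • (b : H →ₗ[ℂ] H) with hF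
  have hFapp : ∀ y : H, F y = a y + (3 : ℂ) • b y := fun y => by
    simp [hF]
  have hv0 : F u = (4 : ℂ) • u := by
    rw [hFapp, hau, hbu]; module
  have hv1 : F (c u) = (-2 : ℂ) • c u := by
    rw [hFapp, apca, apcb, hau, hbu]; module
  have hv2 : F (d u) = (2 : ℂ) • d u := by
    rw [hFapp, apda, apdb, hau, hbu]; module
  have hv3 : F (d (c u)) = (-4 : ℂ) • d (c u) := by
    rw [hFapp, apda, apdb, apca, apcb, hau, hbu]
    simp only [map_neg]
    module
  have hcu : c u ≠ 0 := fun h => hu (by rw [← apc2 u, h, map_zero])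
  have hdu : d u ≠ 0 := fun h => hu (by rw [← apd2 u, h, map_zero])
  have hdcu : d (c u) ≠ 0 := fun h => hcu (by rw [← apd2 (c u), h, map_zero])
  have hinj : Function.Injective (![4, -2, 2, -4] : Fin 4 → ℂ) := by
    intro i j hij
    fin_cases i <;> fin_cases j <;>
      first
        | rfl
        | (exfalso;
           simp only [Matrix.cons_val_zero, Matrix.cons_val_one, Matrix.cons_val_two,
             Matrix.cons_val_three, Matrix.head_cons, Matrix.vecHead, Matrix.vecTail] at hij;
           norm_num at hij)
  have heig : ∀ i : Fin 4, F.HasEigenvector ((![4, -2, 2, -4] : Fin 4 → ℂ) i)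
      ((![u, c u, d u, d (c u)] : Fin 4 → H) i) := by
    intro i
    fin_cases i <;>
      refine ⟨Module.End.mem_eigenspace_iff.mpr ?_, ?_⟩ <;>
      simp only [Matrix.cons_val_zero, Matrix.cons_val_one, Matrix.cons_val_two,
        Matrix.cons_val_three, Matrix.head_cons, Matrix.vecHead, Matrix.vecTail,
        Function.comp_apply] <;>
      first
        | exact hv0 | exact hv1 | exact hv2 | exact hv3
        | exact hu | exact hcu | exact hdu | exact hdcu
  have hli := F.eigenvectors_linearIndependent' _ hinj _ heig
  have := hli.cardinal_lift_le_rank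
  simpa using this

/-- Pairwise commutation of a triple. -/
def Comm3 {A : Type*} [Mul A] (a b c : A) : Prop :=
  a * b = b * a ∧ a * c = c * a ∧ b * c = c * b

/-- If `x₁,…,x₉` are self-adjoint unitaries on a complex Hilbert space satisfying the
Mermin–Peres magic square relations (pairwise commutation within each row and column,
row products `+1`, column products `−1`), then the Hilbert space has dimension `0` or
at least `4`; in particular no such operators exist in dimension `1` (no scalar
solution). -/
theorem magic_square_dimension
    {H : Type*} [NormedAddCommGroup H] [InnerProductSpace ℂ H] [CompleteSpace H]
    (x : Fin 9 → (H →L[ℂ] H))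
    (hsa : ∀ i, IsSelfAdjoint (x i))
    (hsq : ∀ i, x i * x i = 1)
    (r1 : Comm3 (x 0) (x 1) (x 2)) (r2 : Comm3 (x 3) (x 4) (x 5))
    (r3 : Comm3 (x 6) (x 7) (x 8))
    (c1 : Comm3 (x 0) (x 3) (x 6)) (c2 : Comm3 (x 1) (x 4) (x 7))
    (c3 : Comm3 (x 2) (x 5) (x 8))
    (hr1 : x 0 * x 1 * x 2 = 1) (hr2 : x 3 * x 4 * x 5 = 1)
    (hr3 : x 6 * x 7 * x 8 = 1)
    (hc1 : x 0 * x 3 * x 6 = -1) (hc2 : x 1 * x 4 * x 7 = -1)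
    (hc3 : x 2 * x 5 * x 8 = -1) :
    (Module.rank ℂ H = 0 ∨ 4 ≤ Module.rank ℂ H) ∧ Module.rank ℂ H ≠ 1 := by
  -- Step 1: algebraic consequences
  have e1 : x 0 * x 1 = x 2 := by
    simpa [mul_assoc, hsq 2] using congrArg (· * x 2) hr1
  have e5 : x 3 * x 4 = x 5 := by
    simpa [mul_assoc, hsq 5] using congrArg (· * x 5) hr2
  have e8 : x 6 * x 7 = x 8 := by
    simpa [mul_assoc, hsq 8] using congrArg (· * x 8) hr3
  have e6 : x 0 * x 3 = -x 6 := by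
    simpa [mul_assoc, hsq 6] using congrArg (· * x 6) hc1
  have e7 : x 1 * x 4 = -x 7 := by
    simpa [mul_assoc, hsq 7] using congrArg (· * x 7) hc2
  have e25 : x 2 * x 5 = -x 8 := by
    simpa [mul_assoc, hsq 8] using congrArg (· * x 8) hc3
  have key : x 0 * x 1 * (x 3 * x 4) = -(x 0 * x 3 * (x 1 * x 4)) := by
    rw [e1, e5, e25, e6, e7, neg_mul_neg, e8]
  have key2 : x 1 * (x 3 * x 4) = -(x 3 * (x 1 * x 4)) := by
    refine magic_cancel_left (hsq 0) ?_
    rw [mul_neg]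
    simpa [mul_assoc] using key
  have anti13 : x 1 * x 3 = -(x 3 * x 1) := by
    refine magic_cancel_right (hsq 4) ?_
    simpa [mul_assoc, neg_mul] using key2
  have anti13' : x 3 * x 1 = -(x 1 * x 3) := by rw [anti13, neg_neg]
  have E2 : x 0 * x 1 * (x 3 * x 4) = x 3 * x 4 * (x 0 * x 1) := by
    rw [e1, e5]; exact c3.1
  have E3 : x 3 * -(x 0 * (x 1 * x 4)) = x 3 * (x 4 * (x 0 * x 1)) := by
    calc x 3 * -(x 0 * (x 1 * x 4))
        = -(x 3 * (x 0 * (x 1 * x 4))) := mul_neg _ _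
      _ = -((x 3 * x 0) * (x 1 * x 4)) := by rw [← mul_assoc]
      _ = -((x 0 * x 3) * (x 1 * x 4)) := by rw [c1.1]
      _ = -(x 0 * (x 3 * (x 1 * x 4))) := by rw [mul_assoc]
      _ = -(x 0 * ((x 3 * x 1) * x 4)) := by rw [← mul_assoc (x 3) (x 1) (x 4)]
      _ = -(x 0 * (-(x 1 * x 3) * x 4)) := by rw [anti13']
      _ = x 0 * ((x 1 * x 3) * x 4) := by simp [neg_mul, mul_neg]
      _ = x 0 * x 1 * (x 3 * x 4) := by simp [mul_assoc]
      _ = x 3 * x 4 * (x 0 * x 1) := E2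
      _ = x 3 * (x 4 * (x 0 * x 1)) := mul_assoc _ _ _
  have E4 : -(x 0 * (x 1 * x 4)) = x 4 * (x 0 * x 1) := magic_cancel_left (hsq 3) E3
  have anti04 : x 0 * x 4 = -(x 4 * x 0) := by
    have E5 : -(x 0 * x 4) * x 1 = (x 4 * x 0) * x 1 := by
      calc -(x 0 * x 4) * x 1 = -((x 0 * x 4) * x 1) := neg_mul _ _
        _ = -(x 0 * (x 4 * x 1)) := by rw [mul_assoc]
        _ = -(x 0 * (x 1 * x 4)) := by rw [c2.1]
        _ = x 4 * (x 0 * x 1) := E4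
        _ = (x 4 * x 0) * x 1 := by rw [mul_assoc]
    have h' := magic_cancel_right (hsq 1) E5
    rw [← h', neg_neg]
  -- Step 2: dimension
  rcases eq_or_ne (Module.rank ℂ H) 0 with h0 | h0
  · refine ⟨Or.inl h0, ?_⟩
    rw [h0]; exact zero_ne_one
  · have hvex : ∃ v : H, v ≠ 0 := by
      by_contra hcon
      push_neg at hcon
      exact h0 (rank_zero_iff_forall_zero.mpr hcon)
    obtain ⟨v, hv⟩ := hvex
    have ap0 : ∀ y : H, x 0 (x 0 y) = y := fun y => by
      have := DFunLike.congr_fun (hsq 0) y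
      simpa [ContinuousLinearMap.mul_apply] using this
    have ap1 : ∀ y : H, x 1 (x 1 y) = y := fun y => by
      have := DFunLike.congr_fun (hsq 1) y
      simpa [ContinuousLinearMap.mul_apply] using this
    have ap01 : ∀ y : H, x 0 (x 1 y) = x 1 (x 0 y) := fun y => by
      have := DFunLike.congr_fun r1.1 y
      simpa [ContinuousLinearMap.mul_apply] using this
    have hsum : (v + x 0 v + x 1 v + x 0 (x 1 v)) + (v + x 0 v - x 1 v - x 0 (x 1 v))
        + ((v - x 0 v + x 1 v - x 0 (x 1 v)) + (v - x 0 v - x 1 v + x 0 (x 1 v)))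
        = (4 : ℂ) • v := by
      module
    have h4 : 4 ≤ Module.rank ℂ H := by
      by_cases k1 : v + x 0 v + x 1 v + x 0 (x 1 v) = 0
      rotate_left
      · refine magic_aux (x 0) (x 1) (x 3) (x 4) (hsq 3) (hsq 4) c1.1 anti13 anti04 c2.1
          _ k1 ?_ ?_
        · simp only [map_add]
          rw [ap0 v, ap0 (x 1 v)]
          abel
        · simp only [map_add]
          rw [← ap01 v, ← ap01 (x 1 v), ap1 v]
          abel
      by_cases k2 : v + x 0 v - x 1 v - x 0 (x 1 v) = 0
      rotate_left
      · refine magic_aux (x 0) (-x 1) (x 3) (x 4) (hsq 3) (hsq 4) c1.1 ?_ anti04 ?_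
          _ k2 ?_ ?_
        · rw [neg_mul, mul_neg, neg_neg]
          exact anti13'.symm
        · rw [neg_mul, mul_neg, c2.1]
        · simp only [map_add, map_sub]
          rw [ap0 v, ap0 (x 1 v)]
          abel
        · simp only [ContinuousLinearMap.neg_apply, map_add, map_sub]
          rw [← ap01 v, ← ap01 (x 1 v), ap1 v]
          abel
      by_cases k3 : v - x 0 v + x 1 v - x 0 (x 1 v) = 0
      rotate_left
      · refine magic_aux (-x 0) (x 1) (x 3) (x 4) (hsq 3) (hsq 4) ?_ anti13 ?_ c2.1
          _ k3 ?_ ?_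
        · rw [neg_mul, mul_neg, c1.1]
        · rw [neg_mul, mul_neg, neg_neg, anti04, neg_neg]
        · simp only [ContinuousLinearMap.neg_apply, map_add, map_sub]
          rw [ap0 v, ap0 (x 1 v)]
          abel
        · simp only [map_add, map_sub]
          rw [← ap01 v, ← ap01 (x 1 v), ap1 v]
          abel
      by_cases k4 : v - x 0 v - x 1 v + x 0 (x 1 v) = 0
      rotate_left
      · refine magic_aux (-x 0) (-x 1) (x 3) (x 4) (hsq 3) (hsq 4) ?_ ?_ ?_ ?_
          _ k4 ?_ ?_
        · rw [neg_mul, mul_neg, c1.1]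
        · rw [neg_mul, mul_neg, neg_neg]
          exact anti13'.symm
        · rw [neg_mul, mul_neg, neg_neg, anti04, neg_neg]
        · rw [neg_mul, mul_neg, c2.1]
        · simp only [ContinuousLinearMap.neg_apply, map_add, map_sub]
          rw [ap0 v, ap0 (x 1 v)]
          abel
        · simp only [ContinuousLinearMap.neg_apply, map_add, map_sub]
          rw [← ap01 v, ← ap01 (x 1 v), ap1 v]
          abel
      · exfalso
        have hz : (4 : ℂ) • v = 0 := by
          rw [← hsum, k1, k2, k3, k4]
          simp
        have : v = 0 := by
          have h4ne : (4 : ℂ) ≠ 0 := by norm_num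
          simpa [h4ne] using hz
        exact hv this
    refine ⟨Or.inr h4, ?_⟩
    intro h1
    rw [h1] at h4
    have : ¬ ((4 : Cardinal) ≤ 1) := by
      rw [show ((4 : Cardinal) = ((4 : ℕ) : Cardinal)) by norm_num,
        show ((1 : Cardinal) = ((1 : ℕ) : Cardinal)) by norm_num, Nat.cast_le]
      norm_num
    exact this h4
end

section
/- In the Mermin–Peres magic square algebra (the *-algebra generated by x₁,...,x₉ with x_i* = x_i, x_i² = 1, commutation within each row and column, row products 1 and column products −1), the relations x₁x₅ = −x₅x₁ and x₂x₄ = −x₄x₂ hold, and x₁, x₅ each commute with x₂ and x₄. -/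
/-- In the Mermin–Peres magic square algebra — equivalently, for any elements
`x₁,…,x₉` of a complex *-algebra satisfying its defining relations (self-adjoint
involutions, commutation within each row and column, row products `1`, column
products `−1`) — the relations `x₁x₅ = −x₅x₁` and `x₂x₄ = −x₄x₂` hold, and `x₁, x₅`
each commute with `x₂` and `x₄`. -/
theorem magic_square_algebra_anticommutation
    {A : Type*} [Ring A] [Algebra ℂ A] [StarRing A] [StarModule ℂ A]
    (x : Fin 9 → A)
    (hsa : ∀ i, star (x i) = x i)
    (hsq : ∀ i, x i * x i = 1)
    (r1 : x 0 * x 1 = x 1 * x 0 ∧ x 0 * x 2 = x 2 * x 0 ∧ x 1 * x 2 = x 2 * x 1)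
    (r2 : x 3 * x 4 = x 4 * x 3 ∧ x 3 * x 5 = x 5 * x 3 ∧ x 4 * x 5 = x 5 * x 4)
    (r3 : x 6 * x 7 = x 7 * x 6 ∧ x 6 * x 8 = x 8 * x 6 ∧ x 7 * x 8 = x 8 * x 7)
    (c1 : x 0 * x 3 = x 3 * x 0 ∧ x 0 * x 6 = x 6 * x 0 ∧ x 3 * x 6 = x 6 * x 3)
    (c2 : x 1 * x 4 = x 4 * x 1 ∧ x 1 * x 7 = x 7 * x 1 ∧ x 4 * x 7 = x 7 * x 4)
    (c3 : x 2 * x 5 = x 5 * x 2 ∧ x 2 * x 8 = x 8 * x 2 ∧ x 5 * x 8 = x 8 * x 5)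
    (hr1 : x 0 * x 1 * x 2 = 1) (hr2 : x 3 * x 4 * x 5 = 1)
    (hr3 : x 6 * x 7 * x 8 = 1)
    (hc1 : x 0 * x 3 * x 6 = -1) (hc2 : x 1 * x 4 * x 7 = -1)
    (hc3 : x 2 * x 5 * x 8 = -1) :
    x 0 * x 4 = -(x 4 * x 0) ∧ x 1 * x 3 = -(x 3 * x 1) ∧
    x 0 * x 1 = x 1 * x 0 ∧ x 0 * x 3 = x 3 * x 0 ∧
    x 4 * x 1 = x 1 * x 4 ∧ x 4 * x 3 = x 3 * x 4 := by
  obtain ⟨h01, h02, h12⟩ := r1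
  obtain ⟨h34, h35, h45⟩ := r2
  obtain ⟨h67, h68, h78⟩ := r3
  obtain ⟨h03, h06, h36⟩ := c1
  obtain ⟨h14, h17, h47⟩ := c2
  obtain ⟨h25, h28, h58⟩ := c3
  set a := x 0 with ha
  set b := x 1 with hb
  set c := x 3 with hc
  set d := x 4 with hd
  have sa : a * a = 1 := hsq 0
  have sb : b * b = 1 := hsq 1
  have sc : c * c = 1 := hsq 3
  have sd : d * d = 1 := hsq 4
  -- x2 = a*b
  have h2 : x 2 = a * b := by
    calc x 2 = (a * b * x 2) * x 2 := by rw [hr1, one_mul]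
    _ = a * b := by rw [mul_assoc, hsq 2, mul_one]
  -- x5 = c*d
  have h5 : x 5 = c * d := by
    calc x 5 = (c * d * x 5) * x 5 := by rw [hr2, one_mul]
    _ = c * d := by rw [mul_assoc, hsq 5, mul_one]
  -- x6 = -(a*c)
  have h6 : x 6 = -(a * c) := by
    have h : a * c = -x 6 := by
      calc a * c = (a * c * x 6) * x 6 := by rw [mul_assoc, hsq 6, mul_one]
      _ = -x 6 := by rw [hc1, neg_one_mul]
    rw [h, neg_neg]
  -- x7 = -(b*d)
  have h7 : x 7 = -(b * d) := by
    have h : b * d = -x 7 := by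
      calc b * d = (b * d * x 7) * x 7 := by rw [mul_assoc, hsq 7, mul_one]
      _ = -x 7 := by rw [hc2, neg_one_mul]
    rw [h, neg_neg]
  -- x8 = x6 * x7
  have h8 : x 8 = x 6 * x 7 := by
    calc x 8 = (x 6 * x 7 * x 8) * x 8 := by rw [hr3, one_mul]
    _ = x 6 * x 7 := by rw [mul_assoc, hsq 8, mul_one]
  have h8' : x 8 = (a * c) * (b * d) := by rw [h8, h6, h7, neg_mul_neg]
  -- key relation from column 3
  have K : a * (b * (c * (d * (a * (c * (b * d)))))) = -1 := by
    have := hc3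
    rw [h2, h5, h8'] at this
    calc a * (b * (c * (d * (a * (c * (b * d))))))
        = a * b * (c * d) * (a * c * (b * d)) := by
          simp only [mul_assoc]
    _ = -1 := this
  -- cancel a, then b on the left
  have K1 : b * (c * (d * (a * (c * (b * d))))) = -a := by
    have h := congrArg (fun t => a * t) K
    simpa [← mul_assoc, sa] using h
  have K2 : c * (d * (a * (c * (b * d)))) = -(a * b) := by
    have h := congrArg (fun t => b * t) K1
    simp only [← mul_assoc, sb, one_mul, mul_neg] at h
    simp only [← mul_assoc] at *
    rw [h, h01]
  -- cancel d, then b on the right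
  have K3 : c * (d * (a * (c * b))) = -(a * (b * d)) := by
    have h := congrArg (fun t => t * d) K2
    calc c * (d * (a * (c * b)))
        = c * (d * (a * (c * (b * (d * d))))) := by rw [sd, mul_one]
      _ = (c * (d * (a * (c * (b * d))))) * d := by simp only [mul_assoc]
      _ = -(a * b) * d := h
      _ = -(a * (b * d)) := by rw [neg_mul, mul_assoc]
  have K4 : c * (d * (a * c)) = -(a * d) := by
    have h := congrArg (fun t => t * b) K3
    calc c * (d * (a * c))
        = c * (d * (a * (c * (b * b)))) := by rw [sb, mul_one]
      _ = (c * (d * (a * (c * b)))) * b := by simp only [mul_assoc]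
      _ = -(a * (b * d)) * b := h
      _ = -(a * (d * (b * b))) := by
          rw [neg_mul]; congr 1
          rw [mul_assoc, mul_assoc]; congr 1
          rw [← mul_assoc, ← mul_assoc, h14]
      _ = -(a * d) := by rw [sb, mul_one]
  -- c*(d*(a*c)) = d*a using commutations
  have K5a : c * (d * (a * c)) = d * a := by
    calc c * (d * (a * c))
        = c * (d * (c * a)) := by rw [h03]
      _ = c * (d * c * a) := by rw [mul_assoc]
      _ = c * (c * d * a) := by rw [← h34]
      _ = (c * c) * (d * a) := by simp only [mul_assoc]
      _ = d * a := by rw [sc, one_mul]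
  have K5 : d * a = -(a * d) := by rw [← K5a, K4]
  have goal1 : a * d = -(d * a) := by rw [K5, neg_neg]
  -- second anticommutation from commutation of x6, x7
  have L : (a * c) * (b * d) = (b * d) * (a * c) := by
    have h := h67
    rw [h6, h7, neg_mul_neg, neg_mul_neg] at h
    exact h
  have L1 : a * (c * (b * d)) = -(a * (b * (c * d))) := by
    calc a * (c * (b * d)) = (a * c) * (b * d) := by rw [mul_assoc]
      _ = (b * d) * (a * c) := L
      _ = b * (d * a * c) := by simp only [mul_assoc]
      _ = b * (-(a * d) * c) := by rw [K5]
      _ = -(b * (a * (d * c))) := by rw [neg_mul, mul_neg, mul_assoc]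
      _ = -(b * (a * (c * d))) := by rw [h34]
      _ = -((b * a) * (c * d)) := by rw [mul_assoc]
      _ = -((a * b) * (c * d)) := by rw [h01]
      _ = -(a * (b * (c * d))) := by rw [mul_assoc]
  have L2 : c * (b * d) = -(b * (c * d)) := by
    have h := congrArg (fun t => a * t) L1
    simpa [← mul_assoc, sa] using h
  have L3 : c * b = -(b * c) := by
    have h := congrArg (fun t => t * d) L2
    calc c * b = c * (b * (d * d)) := by rw [sd, mul_one]
      _ = (c * (b * d)) * d := by simp only [mul_assoc]
      _ = -(b * (c * d)) * d := h
      _ = -(b * (c * (d * d))) := by simp only [neg_mul, mul_assoc]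
      _ = -(b * c) := by rw [sd, mul_one]
  have goal2 : b * c = -(c * b) := by rw [L3, neg_neg]
  exact ⟨goal1, goal2, h01, h03, h14.symm, h34.symm⟩
end

section
/- If X₁, Z₁ are self-adjoint unitaries on H₁ and X₂, Z₂ on H₂ with X_i² = Z_i² = 1 and X_iZ_i = −Z_iX_i (i = 1,2), then there exists a unique *-homomorphism φ from the Mermin–Peres magic square algebra to B(H₁ ⊗ H₂) with φ(x₁) = Z₁⊗1, φ(x₂) = 1⊗Z₂, φ(x₄) = 1⊗X₂, φ(x₅) = X₁⊗1. -/
/-- The defining relations of the Mermin–Peres magic square algebra, for a family of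
nine operators: self-adjoint involutions, pairwise commutation within each of the six
row/column contexts, row products `1`, column products `−1`. -/
def IsMagicSquareRep {A : Type*} [Ring A] [StarRing A] (y : Fin 9 → A) : Prop :=
  (∀ i, star (y i) = y i) ∧ (∀ i, y i * y i = 1) ∧
  Comm3 (y 0) (y 1) (y 2) ∧ Comm3 (y 3) (y 4) (y 5) ∧ Comm3 (y 6) (y 7) (y 8) ∧
  Comm3 (y 0) (y 3) (y 6) ∧ Comm3 (y 1) (y 4) (y 7) ∧ Comm3 (y 2) (y 5) (y 8) ∧
  y 0 * y 1 * y 2 = 1 ∧ y 3 * y 4 * y 5 = 1 ∧ y 6 * y 7 * y 8 = 1 ∧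
  y 0 * y 3 * y 6 = -1 ∧ y 1 * y 4 * y 7 = -1 ∧ y 2 * y 5 * y 8 = -1

/-- If `X₁, Z₁` and `X₂, Z₂` are self-adjoint unitaries with `Xᵢ² = Zᵢ² = 1` and
`XᵢZᵢ = −ZᵢXᵢ` acting on the two tensor factors of `H₁ ⊗ H₂` (so that each operator in
the first pair commutes with each operator in the second pair), then there is a unique
*-homomorphism `φ` from the Mermin–Peres magic square algebra into the bounded
operators with `φ(x₁) = Z₁⊗1`, `φ(x₂) = 1⊗Z₂`, `φ(x₄) = 1⊗X₂`, `φ(x₅) = X₁⊗1`;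
equivalently (since the magic square algebra is generated by `x₁, x₂, x₄, x₅`), there
is a unique family of nine bounded operators satisfying the magic square relations
whose entries `1, 2, 4, 5` are the four given operators. -/
theorem magic_square_rep_exists_unique
    {H : Type*} [NormedAddCommGroup H] [InnerProductSpace ℂ H] [CompleteSpace H]
    (Z₁ X₁ Z₂ X₂ : H →L[ℂ] H)
    (hZ₁ : IsSelfAdjoint Z₁) (hX₁ : IsSelfAdjoint X₁)
    (hZ₂ : IsSelfAdjoint Z₂) (hX₂ : IsSelfAdjoint X₂)
    (hZ₁2 : Z₁ * Z₁ = 1) (hX₁2 : X₁ * X₁ = 1)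
    (hZ₂2 : Z₂ * Z₂ = 1) (hX₂2 : X₂ * X₂ = 1)
    (hanti1 : X₁ * Z₁ = -(Z₁ * X₁)) (hanti2 : X₂ * Z₂ = -(Z₂ * X₂))
    (hc11 : Z₁ * Z₂ = Z₂ * Z₁) (hc12 : Z₁ * X₂ = X₂ * Z₁)
    (hc21 : X₁ * Z₂ = Z₂ * X₁) (hc22 : X₁ * X₂ = X₂ * X₁) :
    ∃! y : Fin 9 → (H →L[ℂ] H),
      IsMagicSquareRep y ∧ y 0 = Z₁ ∧ y 1 = Z₂ ∧ y 3 = X₂ ∧ y 4 = X₁ := by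
  -- normalization lemmas: order Z₁ < X₁ < Z₂ < X₂
  have s1 : ∀ t, Z₁ * (Z₁ * t) = t := fun t => by rw [← mul_assoc, hZ₁2, one_mul]
  have s2 : ∀ t, X₁ * (X₁ * t) = t := fun t => by rw [← mul_assoc, hX₁2, one_mul]
  have s3 : ∀ t, Z₂ * (Z₂ * t) = t := fun t => by rw [← mul_assoc, hZ₂2, one_mul]
  have s4 : ∀ t, X₂ * (X₂ * t) = t := fun t => by rw [← mul_assoc, hX₂2, one_mul]
  have w1 : X₁ * Z₁ = -(Z₁ * X₁) := hanti1
  have w1' : ∀ t, X₁ * (Z₁ * t) = -(Z₁ * (X₁ * t)) := fun t => by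
    rw [← mul_assoc, hanti1, neg_mul, mul_assoc]
  have w2 : Z₂ * Z₁ = Z₁ * Z₂ := hc11.symm
  have w2' : ∀ t, Z₂ * (Z₁ * t) = Z₁ * (Z₂ * t) := fun t => by
    rw [← mul_assoc, ← hc11, mul_assoc]
  have w3 : Z₂ * X₁ = X₁ * Z₂ := hc21.symm
  have w3' : ∀ t, Z₂ * (X₁ * t) = X₁ * (Z₂ * t) := fun t => by
    rw [← mul_assoc, ← hc21, mul_assoc]
  have w4 : X₂ * Z₁ = Z₁ * X₂ := hc12.symm
  have w4' : ∀ t, X₂ * (Z₁ * t) = Z₁ * (X₂ * t) := fun t => by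
    rw [← mul_assoc, ← hc12, mul_assoc]
  have w5 : X₂ * X₁ = X₁ * X₂ := hc22.symm
  have w5' : ∀ t, X₂ * (X₁ * t) = X₁ * (X₂ * t) := fun t => by
    rw [← mul_assoc, ← hc22, mul_assoc]
  have w6 : X₂ * Z₂ = -(Z₂ * X₂) := hanti2
  have w6' : ∀ t, X₂ * (Z₂ * t) = -(Z₂ * (X₂ * t)) := fun t => by
    rw [← mul_assoc, hanti2, neg_mul, mul_assoc]
  set y : Fin 9 → (H →L[ℂ] H) := ![Z₁, Z₂, Z₁ * Z₂, X₂, X₁, X₁ * X₂, -(Z₁ * X₂),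
      -(Z₂ * X₁), -(Z₁ * (Z₂ * (X₁ * X₂)))] with hy
  have e0 : y 0 = Z₁ := rfl
  have e1 : y 1 = Z₂ := rfl
  have e2 : y 2 = Z₁ * Z₂ := rfl
  have e3 : y 3 = X₂ := rfl
  have e4 : y 4 = X₁ := rfl
  have e5 : y 5 = X₁ * X₂ := rfl
  have e6 : y 6 = -(Z₁ * X₂) := rfl
  have e7 : y 7 = -(Z₂ * X₁) := rfl
  have e8 : y 8 = -(Z₁ * (Z₂ * (X₁ * X₂))) := rfl
  have hrep : IsMagicSquareRep y := by
    refine ⟨?_, ?_, ?_, ?_, ?_, ?_, ?_, ?_, ?_, ?_, ?_, ?_, ?_, ?_⟩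
    · intro i
      fin_cases i <;>
        simp [e0, e1, e2, e3, e4, e5, e6, e7, e8, Comm3, mul_assoc, s1, s2, s3, s4, w1, w1', w2, w2', w3, w3', w4, w4', w5, w5', w6, w6', hZ₁2, hX₁2, hZ₂2, hX₂2,
          star_mul, hZ₁.star_eq, hX₁.star_eq, hZ₂.star_eq, hX₂.star_eq]
    · intro i
      fin_cases i <;> simp [e0, e1, e2, e3, e4, e5, e6, e7, e8, Comm3, mul_assoc, s1, s2, s3, s4, w1, w1', w2, w2', w3, w3', w4, w4', w5, w5', w6, w6', hZ₁2, hX₁2, hZ₂2, hX₂2]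
    all_goals first
      | (refine ⟨?_, ?_, ?_⟩ <;> simp [e0, e1, e2, e3, e4, e5, e6, e7, e8, Comm3, mul_assoc, s1, s2, s3, s4, w1, w1', w2, w2', w3, w3', w4, w4', w5, w5', w6, w6', hZ₁2, hX₁2, hZ₂2, hX₂2])
      | simp [e0, e1, e2, e3, e4, e5, e6, e7, e8, Comm3, mul_assoc, s1, s2, s3, s4, w1, w1', w2, w2', w3, w3', w4, w4', w5, w5', w6, w6', hZ₁2, hX₁2, hZ₂2, hX₂2]
  refine ⟨y, ⟨hrep, rfl, rfl, rfl, rfl⟩, ?_⟩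
  -- uniqueness
  intro z hz
  obtain ⟨⟨-, hsq, -, -, -, -, -, -, r0, r1, -, c0, c1, c2⟩, h0, h1, h3, h4⟩ := hz
  have inv1 : ∀ a b c : H →L[ℂ] H, a * a = 1 → b * b = 1 → a * b * c = 1 → c = b * a := by
    intro a b c ha hb h
    have h' : b * c = a := by
      have : a * (a * b * c) = a * 1 := by rw [h]
      rwa [← mul_assoc, ← mul_assoc, ha, one_mul, mul_one] at this
    have : b * (b * c) = b * a := by rw [h']
    rwa [← mul_assoc, hb, one_mul] at this
  have inv2 : ∀ a b c : H →L[ℂ] H, a * a = 1 → b * b = 1 → a * b * c = -1 → c = -(b * a) := by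
    intro a b c ha hb h
    have h' : b * c = -a := by
      have : a * (a * b * c) = a * (-1) := by rw [h]
      rwa [← mul_assoc, ← mul_assoc, ha, one_mul, mul_neg_one] at this
    have : b * (b * c) = b * (-a) := by rw [h']
    rwa [← mul_assoc, hb, one_mul, mul_neg] at this
  have h2 : z 2 = Z₁ * Z₂ := by
    rw [inv1 _ _ _ (hsq 0) (hsq 1) r0, h0, h1, ← hc11]
  have h5 : z 5 = X₁ * X₂ := by
    rw [inv1 _ _ _ (hsq 3) (hsq 4) r1, h3, h4]
  have h6 : z 6 = -(Z₁ * X₂) := by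
    rw [inv2 _ _ _ (hsq 0) (hsq 3) c0, h0, h3, ← hc12]
  have h7 : z 7 = -(Z₂ * X₁) := by
    rw [inv2 _ _ _ (hsq 1) (hsq 4) c1, h1, h4, ← hc21]
  have h8 : z 8 = -(Z₁ * (Z₂ * (X₁ * X₂))) := by
    rw [inv2 _ _ _ (hsq 2) (hsq 5) c2, h5, h2]
    simp [mul_assoc, w1, w1', w2, w2', w3, w3', w4, w4', w5, w5', w6, w6']
  funext i
  fin_cases i
  exacts [h0, h1, h2, h3, h4, h5, h6, h7, h8]
end
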